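/- Let f_j : ℝ^d → ℝ be convex, differentiable, M_j-smooth (M_j symmetric PSD), and bounded below. Then ∇f_j(x) ∈ Range(M_j) for all x ∈ ℝ^d. -/

import Mathlib

open Matrix

private lemma eq_zero_of_forall_le {a c s : ℝ} (h : ∀ t : ℝ, c ≤ a + t * s) : s = 0 := by
  by_contra hs
  have h1 := h ((c - a - 1) / s)
  rw [div_mul_cancel₀ _ hs] at h1
  linarith

/-- If `f_j` is convex, differentiable, `M_j`-smooth and bounded below, then
`∇f_j(x) ∈ Range(M_j)` for all `x`. -/
theorem grad_in_range
    {d : ℕ}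
    (M : Matrix (Fin d) (Fin d) ℝ) (hM : M.PosSemidef)
    (f : (Fin d → ℝ) → ℝ) (f' : (Fin d → ℝ) → (Fin d → ℝ))
    (hdiff : ∀ x : Fin d → ℝ,
      HasGradientAt (fun z : EuclideanSpace ℝ (Fin d) => f (WithLp.equiv 2 (Fin d → ℝ) z))
        ((WithLp.equiv 2 (Fin d → ℝ)).symm (f' x)) ((WithLp.equiv 2 (Fin d → ℝ)).symm x))
    (hconv : ∀ x y : Fin d → ℝ, f x ≥ f y + f' y ⬝ᵥ (x - y))
    (hsmooth : ∀ x y : Fin d → ℝ,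
      f x ≤ f y + f' y ⬝ᵥ (x - y) + (1 / 2) * (M.mulVec (x - y) ⬝ᵥ (x - y)))
    (hbdd : ∃ c : ℝ, ∀ x : Fin d → ℝ, c ≤ f x) :
    ∀ x : Fin d → ℝ, ∃ u : Fin d → ℝ, M.mulVec u = f' x := by
  intro x
  obtain ⟨c, hc⟩ := hbdd
  -- key: if M w = 0 then f' x ⬝ᵥ w = 0
  have key : ∀ w : Fin d → ℝ, M.mulVec w = 0 → f' x ⬝ᵥ w = 0 := by
    intro w hw
    apply eq_zero_of_forall_le (a := f x) (c := c)
    intro t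
    have h1 := hsmooth (x + t • w) x
    have h2 : (x + t • w) - x = t • w := add_sub_cancel_left x (t • w)
    rw [h2] at h1
    have h3 : M.mulVec (t • w) = 0 := by
      rw [Matrix.mulVec_smul, hw, smul_zero]
    rw [h3] at h1
    simp only [zero_dotProduct, dotProduct_smul, smul_eq_mul, mul_zero,
      add_zero] at h1
    have h4 : f' x ⬝ᵥ (t • w) = t * (f' x ⬝ᵥ w) := by
      rw [dotProduct_smul]; simp [smul_eq_mul]
    calc c ≤ f (x + t • w) := hc _
      _ ≤ f x + f' x ⬝ᵥ (t • w) := by linarith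
      _ = f x + t * (f' x ⬝ᵥ w) := by rw [h4]
  -- orthogonal decomposition in Euclidean space
  set T : EuclideanSpace ℝ (Fin d) →ₗ[ℝ] EuclideanSpace ℝ (Fin d) := Matrix.toEuclideanLin M
  set S : Submodule ℝ (EuclideanSpace ℝ (Fin d)) := LinearMap.range T
  set vE : EuclideanSpace ℝ (Fin d) := (WithLp.equiv 2 (Fin d → ℝ)).symm (f' x)
  set p : EuclideanSpace ℝ (Fin d) := (S.orthogonalProjectionOnto vE : EuclideanSpace ℝ (Fin d))
  set wE : EuclideanSpace ℝ (Fin d) := vE - p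
  have hwS : wE ∈ Sᗮ := Submodule.sub_starProjection_mem_orthogonal vE
  set w : Fin d → ℝ := WithLp.equiv 2 (Fin d → ℝ) wE
  -- M w = 0
  have hMw : M.mulVec w = 0 := by
    have hTw : T wE ∈ S := LinearMap.mem_range_self T wE
    have h0 : inner ℝ (T wE) wE = (0 : ℝ) := hwS (T wE) hTw
    have hinner : inner ℝ (T wE) wE = M.mulVec w ⬝ᵥ w := by
      rw [show T wE = (WithLp.equiv 2 (Fin d → ℝ)).symm (M.mulVec w) from
        Matrix.toEuclideanLin_apply M wE]
      rw [show wE = (WithLp.equiv 2 (Fin d → ℝ)).symm w from rfl]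
      simp [EuclideanSpace.inner_eq_star_dotProduct, dotProduct, mul_comm]
    rw [hinner] at h0
    have := (hM.dotProduct_mulVec_zero_iff w).mp (by simpa [dotProduct_comm] using h0)
    exact this
  -- f' x ⬝ᵥ w = 0
  have hvw : f' x ⬝ᵥ w = 0 := key w hMw
  -- hence ⟪wE, wE⟫ = 0
  have hpw : inner ℝ p wE = (0 : ℝ) := hwS p (S.orthogonalProjectionOnto vE).2
  have hvEw : inner ℝ vE wE = (0 : ℝ) := by
    have : inner ℝ vE wE = f' x ⬝ᵥ w := by
      rw [show vE = (WithLp.equiv 2 (Fin d → ℝ)).symm (f' x) from rfl]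
      simp only [EuclideanSpace.inner_eq_star_dotProduct, dotProduct, star_trivial]
      exact Finset.sum_congr rfl (fun i _ => mul_comm _ _)
    rw [this, hvw]
  have hw0 : wE = 0 := by
    have : inner ℝ wE wE = (0 : ℝ) := by
      have : (inner ℝ (vE - p) wE : ℝ) = inner ℝ vE wE - inner ℝ p wE := inner_sub_left vE p wE
      rw [hvEw, hpw] at this
      simpa [wE] using this
    exact inner_self_eq_zero.mp this
  have hvp : vE = p := by
    have h : vE - p = 0 := hw0
    exact sub_eq_zero.mp h
  obtain ⟨u, hu⟩ := (S.orthogonalProjectionOnto vE).2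
  refine ⟨WithLp.equiv 2 (Fin d → ℝ) u, ?_⟩
  have : T u = vE := by rw [hu]; exact hvp.symm
  have h2 : (WithLp.equiv 2 (Fin d → ℝ)).symm (M.mulVec (WithLp.equiv 2 (Fin d → ℝ) u)) = vE := by
    exact this
  have := congrArg (WithLp.equiv 2 (Fin d → ℝ)) h2
  simpa [vE] using this
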